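/- Fix v > 0 and define F̂(x) = v/(e(v − x)) for 0 ≤ x ≤ (1 − 1/e)v and F̂(x) = 1 for x > (1 − 1/e)v. Then F̂ is the cumulative distribution function of a Borel probability measure μ̂ on [0, ∞); moreover sup_{a ≥ 0} F̂(a)·(v − a) = v/e, the mean of μ̂ equals (1 − 2/e)·v, and hence sup_{a ≥ 0} F̂(a)·(v − a) + ∫ x dμ̂(x) = (1 − 1/e)·v, so this worst-case price distribution makes the bound sup_{a ≥ 0} F(a)(v − a) + E[p] ≥ (1 − 1/e)v tight. In particular F̂(x)(v − x) = v/e for all x ∈ [0, (1 − 1/e)v] and F̂(x)(v − x) < v/e for x > (1 − 1/e)v. -/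

import Mathlib

open MeasureTheory Set Filter

noncomputable def gS (v : ℝ) (hv : 0 < v) : StieltjesFunction ℝ where
  toFun := fun x => if x < 0 then 0 else v / (Real.exp 1 * (v - min x ((1 - (Real.exp 1)⁻¹) * v)))
  mono' := by
    intro x y hxy
    have he : (0:ℝ) < Real.exp 1 := Real.exp_pos 1
    have he1 : (1:ℝ) < Real.exp 1 := by have := Real.add_one_le_exp 1; linarith
    have hvb : (0:ℝ) < v - (1 - (Real.exp 1)⁻¹) * v := by
      have : (Real.exp 1)⁻¹ > 0 := by positivity
      nlinarith
    have hposy : 0 < v - min y ((1 - (Real.exp 1)⁻¹) * v) :=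
      lt_of_lt_of_le hvb (by have := min_le_right y ((1 - (Real.exp 1)⁻¹) * v); linarith)
    have hposx : 0 < v - min x ((1 - (Real.exp 1)⁻¹) * v) :=
      lt_of_lt_of_le hvb (by have := min_le_right x ((1 - (Real.exp 1)⁻¹) * v); linarith)
    dsimp only
    split_ifs with h1 h2
    · exact le_refl 0
    · positivity
    · linarith
    · apply div_le_div_of_nonneg_left (le_of_lt hv) (by positivity)
      have : min x ((1 - (Real.exp 1)⁻¹) * v) ≤ min y ((1 - (Real.exp 1)⁻¹) * v) :=
        min_le_min hxy le_rfl
      nlinarith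
  right_continuous' := by
    intro x
    have he : (0:ℝ) < Real.exp 1 := Real.exp_pos 1
    have he1 : (1:ℝ) < Real.exp 1 := by have := Real.add_one_le_exp 1; linarith
    have hvb : (0:ℝ) < v - (1 - (Real.exp 1)⁻¹) * v := by
      have : (Real.exp 1)⁻¹ > 0 := by positivity
      nlinarith
    have hpos : ∀ z : ℝ, 0 < v - min z ((1 - (Real.exp 1)⁻¹) * v) := fun z =>
      lt_of_lt_of_le hvb (by have := min_le_right z ((1 - (Real.exp 1)⁻¹) * v); linarith)
    have hc : Continuous (fun z : ℝ => v / (Real.exp 1 * (v - min z ((1 - (Real.exp 1)⁻¹) * v)))) := by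
      apply continuous_const.div
      · fun_prop
      · intro z
        have := hpos z
        positivity
    rcases lt_or_ge x 0 with hx | hx
    · have : ∀ᶠ y in nhdsWithin x (Ici x), (fun z : ℝ => if z < 0 then 0 else v / (Real.exp 1 * (v - min z ((1 - (Real.exp 1)⁻¹) * v)))) y = 0 := by
        filter_upwards [eventually_nhdsWithin_of_eventually_nhds (eventually_lt_nhds hx)] with y hy
        simp [hy]
      apply ContinuousWithinAt.congr_of_eventuallyEq (continuousWithinAt_const (b := (0:ℝ))) this
      simp [hx]
    · apply (hc.continuousAt.continuousWithinAt).congr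
      · intro y hy
        have : ¬ y < 0 := not_lt.2 (hx.trans hy)
        simp [this]
      · simp [not_lt.2 hx]

lemma gS_apply (v : ℝ) (hv : 0 < v) (x : ℝ) :
    gS v hv x = if x < 0 then 0 else v / (Real.exp 1 * (v - min x ((1 - (Real.exp 1)⁻¹) * v))) := rfl

lemma gS_tendsto_atBot (v : ℝ) (hv : 0 < v) : Tendsto (gS v hv) atBot (nhds 0) := by
  apply tendsto_const_nhds.congr' (Filter.eventuallyEq_of_mem (Iio_mem_atBot 0) ?_)
  intro x hx
  simp [gS_apply, hx.out]

lemma gS_tendsto_atTop (v : ℝ) (hv : 0 < v) : Tendsto (gS v hv) atTop (nhds 1) := by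
  have he : (0:ℝ) < Real.exp 1 := Real.exp_pos 1
  apply tendsto_const_nhds.congr' (Filter.eventuallyEq_of_mem (Ici_mem_atTop ((1 - (Real.exp 1)⁻¹) * v)) ?_)
  intro x hx
  have he1 : (1:ℝ) < Real.exp 1 := by have := Real.add_one_le_exp 1; linarith
  have hb0 : (0:ℝ) ≤ (1 - (Real.exp 1)⁻¹) * v := by
    have : (Real.exp 1)⁻¹ < 1 := by rw [inv_lt_one_iff₀]; right; exact he1
    nlinarith
  have hx0 : ¬ x < 0 := not_lt.2 (hb0.trans hx.out)
  rw [gS_apply, if_neg hx0, min_eq_right hx.out]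
  have : v - (1 - (Real.exp 1)⁻¹) * v = (Real.exp 1)⁻¹ * v := by ring
  rw [this]
  field_simp

lemma gS_Iic (v : ℝ) (hv : 0 < v) (x : ℝ) :
    (gS v hv).measure (Iic x) = ENNReal.ofReal (gS v hv x) := by
  rw [StieltjesFunction.measure_Iic _ (gS_tendsto_atBot v hv), sub_zero]

lemma gS_prob (v : ℝ) (hv : 0 < v) : IsProbabilityMeasure (gS v hv).measure :=
  StieltjesFunction.isProbabilityMeasure _ (gS_tendsto_atBot v hv) (gS_tendsto_atTop v hv)

lemma gS_Iio (v : ℝ) (hv : 0 < v) : (gS v hv).measure (Iio 0) = 0 := by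
  have : Iio (0:ℝ) = ⋃ n : ℕ, Iic (-((n:ℝ)+1)⁻¹) := by
    ext x
    simp only [mem_Iio, mem_iUnion, mem_Iic]
    constructor
    · intro hx
      obtain ⟨n, hn⟩ := exists_nat_gt (-x)⁻¹
      refine ⟨n, ?_⟩
      have hnx : (0:ℝ) < -x := by linarith
      have h1 : (-x)⁻¹ < (n:ℝ) + 1 := by linarith
      have h2 : ((n:ℝ)+1)⁻¹ < -x := (inv_lt_comm₀ (by positivity) hnx).2 h1
      linarith
    · rintro ⟨n, hn⟩
      have h0 : (0:ℝ) < ((n:ℝ)+1)⁻¹ := by positivity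
      have : -((n:ℝ)+1)⁻¹ < 0 := by linarith
      linarith
  rw [this]
  apply measure_iUnion_null
  intro n
  have h0 : (0:ℝ) < ((n:ℝ)+1)⁻¹ := by positivity
  rw [gS_Iic, gS_apply, if_pos (by linarith), ENNReal.ofReal_zero]

lemma gS_nonneg (v : ℝ) (hv : 0 < v) (x : ℝ) : 0 ≤ gS v hv x := by
  have he : (0:ℝ) < Real.exp 1 := Real.exp_pos 1
  have he1 : (1:ℝ) < Real.exp 1 := by have := Real.add_one_le_exp 1; linarith
  have hvb : (0:ℝ) < v - (1 - (Real.exp 1)⁻¹) * v := by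
    have : (Real.exp 1)⁻¹ > 0 := by positivity
    nlinarith
  have hpos : 0 < v - min x ((1 - (Real.exp 1)⁻¹) * v) :=
    lt_of_lt_of_le hvb (by have := min_le_right x ((1 - (Real.exp 1)⁻¹) * v); linarith)
  rw [gS_apply]
  split_ifs
  · exact le_refl 0
  · positivity

lemma gS_le_one (v : ℝ) (hv : 0 < v) (x : ℝ) : gS v hv x ≤ 1 := by
  have he : (0:ℝ) < Real.exp 1 := Real.exp_pos 1
  have he1 : (1:ℝ) < Real.exp 1 := by have := Real.add_one_le_exp 1; linarith
  have hvb : v - (1 - (Real.exp 1)⁻¹) * v = (Real.exp 1)⁻¹ * v := by ring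
  rw [gS_apply]
  split_ifs
  · norm_num
  · rw [div_le_one]
    · have h1 : min x ((1 - (Real.exp 1)⁻¹) * v) ≤ (1 - (Real.exp 1)⁻¹) * v := min_le_right _ _
      have h2 : Real.exp 1 * ((Real.exp 1)⁻¹ * v) = v := by field_simp
      nlinarith
    · have : (0:ℝ) < v - (1 - (Real.exp 1)⁻¹) * v := by
        rw [hvb]; positivity
      have h1 : min x ((1 - (Real.exp 1)⁻¹) * v) ≤ (1 - (Real.exp 1)⁻¹) * v := min_le_right _ _
      nlinarith

lemma gS_eq_one (v : ℝ) (hv : 0 < v) (x : ℝ) (hx : (1 - (Real.exp 1)⁻¹) * v ≤ x) :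
    gS v hv x = 1 := by
  have he : (0:ℝ) < Real.exp 1 := Real.exp_pos 1
  have he1 : (1:ℝ) < Real.exp 1 := by have := Real.add_one_le_exp 1; linarith
  have hb0 : (0:ℝ) ≤ (1 - (Real.exp 1)⁻¹) * v := by
    have : (Real.exp 1)⁻¹ < 1 := by rw [inv_lt_one_iff₀]; right; exact he1
    nlinarith
  rw [gS_apply, if_neg (not_lt.2 (hb0.trans hx)), min_eq_right hx]
  have : v - (1 - (Real.exp 1)⁻¹) * v = (Real.exp 1)⁻¹ * v := by ring
  rw [this]
  field_simp

lemma gS_Ioi (v : ℝ) (hv : 0 < v) (t : ℝ) :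
    (gS v hv).measure (Ioi t) = 1 - ENNReal.ofReal (gS v hv t) := by
  have := gS_prob v hv
  have : (gS v hv).measure (Ioi t) = (gS v hv).measure univ - (gS v hv).measure (Iic t) := by
    rw [← Iic_union_Ioi (a := t), measure_union (by simp [disjoint_left]) measurableSet_Ioi]
    rw [ENNReal.add_sub_cancel_left (measure_ne_top _ _)]
  rw [this, measure_univ, gS_Iic]

lemma gS_integrable_id (v : ℝ) (hv : 0 < v) : Integrable (fun x : ℝ => x) (gS v hv).measure := by
  have := gS_prob v hv
  have hb0 : (0:ℝ) ≤ (1 - (Real.exp 1)⁻¹) * v := by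
    have he1 : (1:ℝ) < Real.exp 1 := by have := Real.add_one_le_exp 1; linarith
    have : (Real.exp 1)⁻¹ < 1 := by rw [inv_lt_one_iff₀]; right; exact he1
    nlinarith
  apply Integrable.mono' (integrable_const ((1 - (Real.exp 1)⁻¹) * v))
    measurable_id.aestronglyMeasurable
  rw [ae_iff]
  have hnull : (gS v hv).measure (Iio 0 ∪ Ioi ((1 - (Real.exp 1)⁻¹) * v)) = 0 := by
    apply measure_union_null (gS_Iio v hv)
    rw [gS_Ioi, gS_eq_one v hv _ le_rfl, ENNReal.ofReal_one, tsub_self]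
  apply measure_mono_null ?_ hnull
  intro x hx
  simp only [mem_setOf_eq, not_le, Real.norm_eq_abs] at hx
  rcases lt_or_ge x 0 with h | h
  · exact Or.inl h
  · exact Or.inr (by simp only [id] at hx; rw [abs_of_nonneg h] at hx; exact hx)

lemma gS_mean (v : ℝ) (hv : 0 < v) :
    ∫ x, x ∂(gS v hv).measure = (1 - 2 * (Real.exp 1)⁻¹) * v := by
  have hprob := gS_prob v hv
  have he : (0:ℝ) < Real.exp 1 := Real.exp_pos 1
  have he1 : (1:ℝ) < Real.exp 1 := by have := Real.add_one_le_exp 1; linarith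
  have hei : (Real.exp 1)⁻¹ < 1 := by rw [inv_lt_one_iff₀]; right; exact he1
  set b := (1 - (Real.exp 1)⁻¹) * v with hbdef
  have hb0 : (0:ℝ) < b := by rw [hbdef]; nlinarith
  have hbv : b < v := by rw [hbdef]; nlinarith [inv_pos.2 he]
  have hvb : v - b = (Real.exp 1)⁻¹ * v := by rw [hbdef]; ring
  have hnn : 0 ≤ᵐ[(gS v hv).measure] (fun x : ℝ => x) := by
    rw [Filter.EventuallyLE, ae_iff]
    apply measure_mono_null ?_ (gS_Iio v hv)
    intro x hx
    simp only [mem_setOf_eq, Pi.zero_apply, not_le] at hx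
    exact hx
  rw [(gS_integrable_id v hv).integral_eq_integral_meas_lt hnn]
  have hIoi : ∀ t : ℝ, {a : ℝ | t < a} = Ioi t := fun t => rfl
  have step1 : ∀ t : ℝ, ((gS v hv).measure {a : ℝ | t < a}).toReal = 1 - gS v hv t := by
    intro t
    rw [hIoi, gS_Ioi]
    rw [← ENNReal.ofReal_one, ← ENNReal.ofReal_sub _ (gS_nonneg v hv t),
      ENNReal.toReal_ofReal (by linarith [gS_le_one v hv t])]
  simp_rw [measureReal_def, step1]
  have hsplit : Ioc (0:ℝ) b ∪ Ioi b = Ioi 0 := Ioc_union_Ioi_eq_Ioi hb0.le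
  have hmeas_g : Measurable (gS v hv) := (gS v hv).mono.measurable
  have hint1 : IntegrableOn (fun t : ℝ => 1 - gS v hv t) (Ioc 0 b) := by
    apply Integrable.mono' (integrable_const 1)
      ((measurable_const.sub hmeas_g).aestronglyMeasurable)
    apply ae_of_all
    intro t
    show ‖(1:ℝ) - gS v hv t‖ ≤ 1
    rw [Real.norm_eq_abs, abs_le]
    constructor
    · linarith [gS_le_one v hv t]
    · linarith [gS_nonneg v hv t]
  have hint2 : IntegrableOn (fun t : ℝ => 1 - gS v hv t) (Ioi b) := by
    apply (integrableOn_congr_fun ?_ measurableSet_Ioi).2 (integrableOn_zero)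
    intro t ht
    show (1:ℝ) - gS v hv t = 0
    rw [gS_eq_one v hv t (le_of_lt ht)]
    ring
  rw [← hsplit, setIntegral_union (Ioc_disjoint_Ioi le_rfl) measurableSet_Ioi hint1 hint2]
  have hzero : ∫ t in Ioi b, (1 - gS v hv t) = 0 := by
    rw [setIntegral_congr_fun measurableSet_Ioi (g := fun _ => (0:ℝ))]
    · simp
    · intro t ht
      show (1:ℝ) - gS v hv t = 0
      rw [gS_eq_one v hv t (le_of_lt ht)]
      ring
  rw [hzero, add_zero, ← intervalIntegral.integral_of_le hb0.le]
  have hEq : EqOn (fun t : ℝ => 1 - gS v hv t)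
      (fun t : ℝ => 1 - (v / Real.exp 1) * (v - t)⁻¹) (uIcc 0 b) := by
    intro t ht
    rw [uIcc_of_le hb0.le] at ht
    have ht0 : ¬ t < 0 := not_lt.2 ht.1
    have htb : min t b = t := min_eq_left ht.2
    simp only [gS_apply, if_neg ht0, ← hbdef, htb]
    rw [← div_div, div_eq_mul_inv]
  rw [intervalIntegral.integral_congr hEq]
  have hcont : ContinuousOn (fun t : ℝ => (v - t)⁻¹) (uIcc 0 b) := by
    apply ContinuousOn.inv₀ (by fun_prop)
    intro t ht
    rw [uIcc_of_le hb0.le] at ht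
    have : t ≤ b := ht.2
    intro hc
    nlinarith [sub_eq_zero.1 hc]
  have hii : IntervalIntegrable (fun t : ℝ => (v / Real.exp 1) * (v - t)⁻¹) volume 0 b :=
    (hcont.intervalIntegrable).const_mul _
  rw [intervalIntegral.integral_sub intervalIntegrable_const hii,
    intervalIntegral.integral_const_mul]
  have hsub : (∫ t in (0:ℝ)..b, (v - t)⁻¹) = ∫ x in (v - b)..(v - 0), x⁻¹ :=
    intervalIntegral.integral_comp_sub_left (fun x : ℝ => x⁻¹) v
  rw [hsub, sub_zero, integral_inv_of_pos (by linarith) hv]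
  have : v / (v - b) = Real.exp 1 := by
    rw [hvb]
    field_simp
  rw [this, Real.log_exp]
  simp only [intervalIntegral.integral_const, smul_eq_mul, mul_one, sub_zero]
  rw [hbdef]
  field_simp
  ring


/-- The worst-case price distribution for the first-price single-item auction:
`F̂(x) = v/(e(v−x))` for `0 ≤ x ≤ (1−1/e)v` and `F̂(x) = 1` for larger `x` is the CDF of a Borel
probability measure `μ̂` on `[0, ∞)`; `sup_{a ≥ 0} F̂(a)(v−a) = v/e`; the mean of `μ̂` is
`(1 − 2/e)v`; hence `sup_{a ≥ 0} F̂(a)(v−a) + ∫ x dμ̂ = (1 − 1/e)v`, so the generic lower bound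
is tight.  Moreover `F̂(x)(v−x) = v/e` on `[0, (1−1/e)v]` and `F̂(x)(v−x) < v/e` beyond. -/
theorem stmt_1
    (v : ℝ) (hv : 0 < v)
    (Fhat : ℝ → ℝ)
    (hFhat : ∀ x : ℝ, 0 ≤ x →
      Fhat x = if x ≤ (1 - (Real.exp 1)⁻¹) * v
        then v / (Real.exp 1 * (v - x)) else 1) :
    (∃ μ : Measure ℝ, IsProbabilityMeasure μ ∧
        μ (Set.Iio 0) = 0 ∧
        (∀ x : ℝ, 0 ≤ x → (μ (Set.Iic x)).toReal = Fhat x) ∧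
        (∫ x, x ∂μ) = (1 - 2 * (Real.exp 1)⁻¹) * v ∧
        sSup {y : ℝ | ∃ a : ℝ, 0 ≤ a ∧ y = Fhat a * (v - a)} + (∫ x, x ∂μ)
          = (1 - (Real.exp 1)⁻¹) * v) ∧
    sSup {y : ℝ | ∃ a : ℝ, 0 ≤ a ∧ y = Fhat a * (v - a)} = v / Real.exp 1 ∧
    (∀ x : ℝ, 0 ≤ x → x ≤ (1 - (Real.exp 1)⁻¹) * v →
      Fhat x * (v - x) = v / Real.exp 1) ∧
    (∀ x : ℝ, (1 - (Real.exp 1)⁻¹) * v < x → Fhat x * (v - x) < v / Real.exp 1) := by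
  have he : (0:ℝ) < Real.exp 1 := Real.exp_pos 1
  have he1 : (1:ℝ) < Real.exp 1 := by have := Real.add_one_le_exp 1; linarith
  have hei : (Real.exp 1)⁻¹ < 1 := by rw [inv_lt_one_iff₀]; right; exact he1
  have hei0 : (0:ℝ) < (Real.exp 1)⁻¹ := by positivity
  have hb0 : (0:ℝ) < (1 - (Real.exp 1)⁻¹) * v := by nlinarith
  have hbv : (1 - (Real.exp 1)⁻¹) * v < v := by nlinarith
  have hvb : v - (1 - (Real.exp 1)⁻¹) * v = (Real.exp 1)⁻¹ * v := by ring
  have hdiv : v / Real.exp 1 = (Real.exp 1)⁻¹ * v := by rw [div_eq_inv_mul]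
  -- part 3
  have part3 : ∀ x : ℝ, 0 ≤ x → x ≤ (1 - (Real.exp 1)⁻¹) * v →
      Fhat x * (v - x) = v / Real.exp 1 := by
    intro x hx hxb
    rw [hFhat x hx, if_pos hxb]
    have hvx : v - x ≠ 0 := by intro hc; nlinarith [sub_eq_zero.1 hc]
    field_simp
  -- part 4
  have part4 : ∀ x : ℝ, (1 - (Real.exp 1)⁻¹) * v < x →
      Fhat x * (v - x) < v / Real.exp 1 := by
    intro x hx
    rw [hFhat x (by linarith), if_neg (not_le.2 hx), one_mul, hdiv]
    linarith
  -- sup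
  have hsup : sSup {y : ℝ | ∃ a : ℝ, 0 ≤ a ∧ y = Fhat a * (v - a)} = v / Real.exp 1 := by
    apply IsGreatest.csSup_eq
    constructor
    · exact ⟨0, le_rfl, (part3 0 le_rfl hb0.le).symm⟩
    · rintro y ⟨a, ha, rfl⟩
      rcases le_or_gt a ((1 - (Real.exp 1)⁻¹) * v) with h | h
      · exact (part3 a ha h).le
      · exact (part4 a h).le
  refine ⟨⟨(gS v hv).measure, gS_prob v hv, gS_Iio v hv, ?_, gS_mean v hv, ?_⟩, hsup, part3, part4⟩
  · intro x hx
    rw [gS_Iic, ENNReal.toReal_ofReal (gS_nonneg v hv x), hFhat x hx]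
    split_ifs with h
    · rw [gS_apply, if_neg (not_lt.2 hx), min_eq_left h]
    · exact gS_eq_one v hv x (not_le.1 h).le
  · rw [hsup, gS_mean v hv, hdiv]
    ring
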